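/- arXiv:2002.09651 — 3 statements merged into one kernel-verified Lean document; each statement's English description precedes it below -/
import Mathlib

section
/- Let X be a Polish space, E and F countable Borel equivalence relations on X such that every E-class is properly contained in an F-class, and let μ be an E-ergodic, F-quasi-invariant Borel probability measure on X. Then for every Borel set B ⊆ X, for μ-almost every x ∈ B, the (E restricted to B)-class of x is properly contained in an (F restricted to B)-class. -/
open MeasureTheory

section Aux

open Set Function Filter Topology ENNReal

/-- The set of sequences whose first `n` coordinates are bounded by `v`. -/
def nbox (v : ℕ → ℕ) (n : ℕ) : Set (ℕ → ℕ) := {x | ∀ i < n, x i ≤ v i}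

lemma nbox_zero (v : ℕ → ℕ) : nbox v 0 = univ := by
  ext x; simp [nbox]

lemma nbox_succ (v : ℕ → ℕ) (n k : ℕ) :
    nbox (Function.update v n k) (n + 1) = nbox v n ∩ {x | x n ≤ k} := by
  ext x
  simp only [nbox, mem_setOf_eq, mem_inter_iff]
  constructor
  · intro h
    refine ⟨fun i hi => ?_, ?_⟩
    · have := h i (hi.trans n.lt_succ_self)
      rwa [Function.update_of_ne hi.ne] at this
    · have := h n n.lt_succ_self
      rwa [Function.update_self] at this
  · rintro ⟨h1, h2⟩ i hi
    rcases Nat.lt_succ_iff_lt_or_eq.1 hi with h | rfl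
    · rw [Function.update_of_ne h.ne]; exact h1 i h
    · rwa [Function.update_self]

lemma nbox_antitone (v : ℕ → ℕ) : Antitone (nbox v) := by
  intro a b hab x hx i hi
  exact hx i (lt_of_lt_of_le hi hab)

/-- Recursive construction of a sequence of partial bounds. -/
noncomputable def capSeq (P : (ℕ → ℕ) → ℕ → Prop) (base : P (fun _ => 0) 0)
    (step : ∀ v n, P v n → ∃ k, P (Function.update v n k) (n + 1)) :
    (n : ℕ) → {v : ℕ → ℕ // P v n}
  | 0 => ⟨fun _ => 0, base⟩
  | n + 1 =>
    ⟨Function.update (capSeq P base step n).1 n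
        (step (capSeq P base step n).1 n (capSeq P base step n).2).choose,
      (step (capSeq P base step n).1 n (capSeq P base step n).2).choose_spec⟩

lemma capSeq_coherent (P : (ℕ → ℕ) → ℕ → Prop) (base : P (fun _ => 0) 0)
    (step : ∀ v n, P v n → ∃ k, P (Function.update v n k) (n + 1)) :
    ∀ m i, i < m → (capSeq P base step m).1 i = (capSeq P base step (i + 1)).1 i := by
  intro m
  induction m with
  | zero => intro i hi; omega
  | succ m ih =>
    intro i hi
    rcases Nat.lt_succ_iff_lt_or_eq.1 hi with h | rfl
    · show (capSeq P base step (m + 1)).1 i = _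
      rw [capSeq]
      simp only
      rw [Function.update_of_ne h.ne]
      exact ih i h
    · rfl

/-- Choquet-capacitability-style approximation: the range of a continuous map on Baire space
can be approximated from inside, in measure, by compact subsets. -/
lemma exists_compact_in_range {X : Type*} [TopologicalSpace X] [PolishSpace X]
    [MeasurableSpace X] [BorelSpace X] (μ : Measure X) [IsFiniteMeasure μ]
    {f : (ℕ → ℕ) → X} (hf : Continuous f) {t : ℝ≥0∞} (ht : t < μ (range f)) :
    ∃ K, IsCompact K ∧ K ⊆ range f ∧ t ≤ μ K := by
  letI := TopologicalSpace.upgradeIsCompletelyMetrizable X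
  set P : (ℕ → ℕ) → ℕ → Prop := fun v n => t < μ (f '' nbox v n) with hP
  have base : P (fun _ => 0) 0 := by
    simpa [hP, nbox_zero, image_univ] using ht
  have step : ∀ v n, P v n → ∃ k, P (Function.update v n k) (n + 1) := by
    intro v n h
    have hmono : Monotone (fun k : ℕ => f '' (nbox v n ∩ {x | x n ≤ k})) := by
      intro a b hab
      exact image_mono (inter_subset_inter_right _ (fun x hx => le_trans hx hab))
    have hunion : ⋃ k : ℕ, f '' (nbox v n ∩ {x | x n ≤ k}) = f '' nbox v n := by
      apply Subset.antisymm
      · exact iUnion_subset fun k => image_mono inter_subset_left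
      · rintro y ⟨x, hx, rfl⟩
        exact mem_iUnion.2 ⟨x n, mem_image_of_mem f ⟨hx, le_refl (x n)⟩⟩
    have hm := hmono.measure_iUnion (μ := μ)
    rw [hunion] at hm
    have h2 : t < ⨆ k : ℕ, μ (f '' (nbox v n ∩ {x | x n ≤ k})) := hm ▸ h
    obtain ⟨k, hk⟩ := lt_iSup_iff.1 h2
    refine ⟨k, ?_⟩
    show t < μ (f '' nbox (Function.update v n k) (n + 1))
    rw [nbox_succ]
    exact hk
  set g := capSeq P base step with hg
  set s : ℕ → ℕ := fun i => (g (i + 1)).1 i with hs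
  have hbox : ∀ n, nbox s n = nbox (g n).1 n := by
    intro n
    ext x
    simp only [nbox, mem_setOf_eq]
    refine forall₂_congr fun i hi => ?_
    have hc : (g n).1 i = s i := by
      simp only [hs, hg]
      exact capSeq_coherent P base step n i hi
    rw [hc]
  have hsn : ∀ n, t < μ (f '' nbox s n) := fun n => by rw [hbox n]; exact (g n).2
  set Kbox : Set (ℕ → ℕ) := {x | ∀ i, x i ≤ s i} with hKb
  have hKboxc : IsCompact Kbox := by
    have : Kbox = Set.pi univ (fun i => Set.Iic (s i)) := by
      ext x; simp [hKb, Set.mem_pi, Pi.le_def]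
    rw [this]
    exact isCompact_univ_pi fun i => (Set.finite_Iic (s i)).isCompact
  refine ⟨f '' Kbox, hKboxc.image hf, image_subset_range f _, ?_⟩
  set D : ℕ → Set X := fun n => closure (f '' nbox s n) with hD
  have hDanti : Antitone D := fun a b hab =>
    closure_mono (image_mono (nbox_antitone s hab))
  have hDm : μ (⋂ n, D n) = ⨅ n, μ (D n) :=
    hDanti.measure_iInter (fun n => isClosed_closure.measurableSet.nullMeasurableSet)
      ⟨0, measure_ne_top μ _⟩
  have hint : (⋂ n, D n) ⊆ f '' Kbox := by
    intro z hz
    have hxn : ∀ n : ℕ, ∃ x, x ∈ nbox s n ∧ dist z (f x) < 1 / (n + 1) := by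
      intro n
      have hzn : z ∈ closure (f '' nbox s n) := mem_iInter.1 hz n
      obtain ⟨w, hw, hwd⟩ := Metric.mem_closure_iff.1 hzn (1 / (n + 1)) (by positivity)
      obtain ⟨x, hx, rfl⟩ := hw
      exact ⟨x, hx, hwd⟩
    choose x hx1 hx2 using hxn
    set xt : ℕ → ℕ → ℕ := fun n i => min (x n i) (s i) with hxt
    have hxtK : ∀ n, xt n ∈ Kbox := fun n i => min_le_right _ _
    obtain ⟨a, haK, φ, hφ, hconv⟩ := hKboxc.tendsto_subseq hxtK
    have hxa : Tendsto (fun k => x (φ k)) atTop (𝓝 a) := by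
      rw [tendsto_pi_nhds]
      intro i
      have h1 : Tendsto (fun k => xt (φ k) i) atTop (𝓝 (a i)) := by
        have h2 := hconv
        rw [tendsto_pi_nhds] at h2
        exact h2 i
      refine Tendsto.congr' ?_ h1
      filter_upwards [eventually_ge_atTop (i + 1)] with k hk
      have hik : i < φ k := lt_of_lt_of_le (Nat.lt_of_lt_of_le i.lt_succ_self hk) hφ.le_apply
      have hle : x (φ k) i ≤ s i := hx1 (φ k) i hik
      simp [hxt, min_eq_left hle]
    have hfa : Tendsto (fun k => f (x (φ k))) atTop (𝓝 (f a)) := (hf.tendsto a).comp hxa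
    have hfz : Tendsto (fun k => f (x (φ k))) atTop (𝓝 z) := by
      rw [tendsto_iff_dist_tendsto_zero]
      refine squeeze_zero (fun k => dist_nonneg) (fun k => ?_)
        tendsto_one_div_add_atTop_nhds_zero_nat
      calc dist (f (x (φ k))) z = dist z (f (x (φ k))) := dist_comm _ _
        _ ≤ 1 / (φ k + 1) := (hx2 (φ k)).le
        _ ≤ 1 / (k + 1) := by
            apply one_div_le_one_div_of_le
            · positivity
            · have : (k : ℝ) ≤ φ k := by exact_mod_cast hφ.le_apply
              linarith
    exact ⟨a, haK, tendsto_nhds_unique hfa hfz⟩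
  calc t ≤ ⨅ n, μ (D n) := le_iInf fun n => le_trans (hsn n).le (measure_mono subset_closure)
    _ = μ (⋂ n, D n) := hDm.symm
    _ ≤ μ (f '' Kbox) := measure_mono hint

/-- An analytic set in a Polish space contains a measurable subset of full outer measure. -/
lemma analyticSet_null_kernel {X : Type*} [TopologicalSpace X] [PolishSpace X]
    [MeasurableSpace X] [BorelSpace X] (μ : Measure X) [IsFiniteMeasure μ]
    {s : Set X} (hs : MeasureTheory.AnalyticSet s) :
    ∃ M, MeasurableSet M ∧ M ⊆ s ∧ μ (s \ M) = 0 := by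
  letI := TopologicalSpace.upgradeIsCompletelyMetrizable X
  rw [MeasureTheory.AnalyticSet] at hs
  rcases hs with rfl | ⟨f, hf, rfl⟩
  · exact ⟨∅, MeasurableSet.empty, Subset.rfl, by simp⟩
  rcases eq_or_ne (μ (range f)) 0 with h0 | h0
  · exact ⟨∅, MeasurableSet.empty, empty_subset _, by simpa using h0⟩
  have hK : ∀ n : ℕ, ∃ K, IsCompact K ∧ K ⊆ range f ∧
      μ (range f) - (((n : ℝ≥0∞)) + 1)⁻¹ ≤ μ K := by
    intro n
    have hlt : μ (range f) - ((n : ℝ≥0∞) + 1)⁻¹ < μ (range f) :=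
      ENNReal.sub_lt_self (measure_ne_top μ _) h0 (by simp)
    obtain ⟨K, h1, h2, h3⟩ := exists_compact_in_range μ hf hlt
    exact ⟨K, h1, h2, h3⟩
  choose K hKc hKsub hKμ using hK
  refine ⟨⋃ n, K n, MeasurableSet.iUnion (fun n => (hKc n).isClosed.measurableSet),
    iUnion_subset hKsub, ?_⟩
  have hμM : μ (range f) ≤ μ (⋃ n, K n) := by
    by_contra hlt
    push_neg at hlt
    have hd : μ (range f) - μ (⋃ n, K n) ≠ 0 := by
      simp only [ne_eq, tsub_eq_zero_iff_le, not_le]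
      exact hlt
    obtain ⟨n, hn⟩ := ENNReal.exists_inv_nat_lt hd
    have hn' : ((n : ℝ≥0∞) + 1)⁻¹ < μ (range f) - μ (⋃ k, K k) :=
      lt_of_le_of_lt (ENNReal.inv_le_inv.2 (le_add_of_nonneg_right zero_le_one)) hn
    have h1 : μ (range f) - ((n : ℝ≥0∞) + 1)⁻¹ ≤ μ (⋃ k, K k) :=
      le_trans (hKμ n) (measure_mono (subset_iUnion K n))
    have h2 : μ (range f) ≤ μ (⋃ k, K k) + ((n : ℝ≥0∞) + 1)⁻¹ := tsub_le_iff_right.1 h1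
    have h3 : μ (⋃ k, K k) + ((n : ℝ≥0∞) + 1)⁻¹ <
        μ (⋃ k, K k) + (μ (range f) - μ (⋃ k, K k)) :=
      ENNReal.add_lt_add_left (measure_ne_top μ _) hn'
    rw [add_tsub_cancel_of_le hlt.le] at h3
    exact absurd (lt_of_le_of_lt h2 h3) (lt_irrefl _)
  have hMsub : (⋃ n, K n) ⊆ toMeasurable μ (range f) :=
    le_trans (iUnion_subset hKsub) (subset_toMeasurable _ _)
  have hzero : μ (toMeasurable μ (range f) \ ⋃ n, K n) = 0 := by
    rw [measure_diff hMsub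
      (MeasurableSet.iUnion (fun n => (hKc n).isClosed.measurableSet)).nullMeasurableSet
      (measure_ne_top μ _), measure_toMeasurable]
    exact tsub_eq_zero_iff_le.2 hμM
  exact measure_mono_null (diff_subset_diff_left (subset_toMeasurable _ _)) hzero

end Aux

open Set Function Filter Topology ENNReal in
/-- If every `E`-class is properly contained in an `F`-class and `μ` is
`E`-ergodic and `F`-quasi-invariant, then for every Borel `B`, almost every point of `B`
has its `(E↾B)`-class properly contained in an `(F↾B)`-class. -/
theorem stmt_9 {X : Type*} [TopologicalSpace X] [PolishSpace X]
    [MeasurableSpace X] [BorelSpace X]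
    (E F : X → X → Prop) (hEeq : Equivalence E) (hFeq : Equivalence F)
    (hEmeas : MeasurableSet {p : X × X | E p.1 p.2})
    (hFmeas : MeasurableSet {p : X × X | F p.1 p.2})
    (hEcount : ∀ x : X, {y | E x y}.Countable)
    (hFcount : ∀ x : X, {y | F x y}.Countable)
    (hEF : ∀ x y, E x y → F x y)
    (hproper : ∀ x : X, ∃ y, F x y ∧ ¬ E x y)
    (μ : Measure X) [IsProbabilityMeasure μ]
    (herg : ∀ B : Set X, MeasurableSet B → (∀ x y, x ∈ B → E x y → y ∈ B) →
      μ B = 0 ∨ μ Bᶜ = 0)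
    (hqi : ∀ A : Set X, MeasurableSet A → μ A = 0 → μ {y | ∃ x ∈ A, F x y} = 0)
    (B : Set X) (hB : MeasurableSet B) :
    ∀ᵐ x ∂μ, x ∈ B → ∃ y ∈ B, F x y ∧ ¬ E x y := by
  classical
  -- the analytic set of points having a witness in `B`
  set P : Set (X × X) := {p : X × X | p.2 ∈ B ∧ F p.1 p.2 ∧ ¬ E p.1 p.2} with hPdef
  have hPm : MeasurableSet P := by
    have h1 : MeasurableSet {p : X × X | p.2 ∈ B} := measurable_snd hB
    exact h1.inter (hFmeas.inter hEmeas.compl)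
  set Zc : Set X := Prod.fst '' P with hZcdef
  have hZc : ∀ x, x ∈ Zc ↔ ∃ y, y ∈ B ∧ F x y ∧ ¬ E x y := by
    intro x
    constructor
    · rintro ⟨⟨a, b⟩, ⟨hb, hf, he⟩, rfl⟩
      exact ⟨b, hb, hf, he⟩
    · rintro ⟨y, hy⟩
      exact ⟨(x, y), hy, rfl⟩
  have hZcA : MeasureTheory.AnalyticSet Zc :=
    hPm.analyticSet.image_of_continuous continuous_fst
  obtain ⟨M, hMm, hMsub, hMnull⟩ := analyticSet_null_kernel μ hZcA
  set H : Set X := M ∪ toMeasurable μ (Zc \ M) with hHdef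
  have hHm : MeasurableSet H := hMm.union (measurableSet_toMeasurable _ _)
  have hZcH : Zc ⊆ H := by
    intro x hx
    by_cases hxM : x ∈ M
    · exact Or.inl hxM
    · exact Or.inr (subset_toMeasurable _ _ ⟨hx, hxM⟩)
  have hHZc : μ (toMeasurable μ (Zc \ M)) = 0 := by
    rw [measure_toMeasurable]; exact hMnull
  have hHdiff : H \ Zc ⊆ toMeasurable μ (Zc \ M) := by
    rintro x ⟨hxH, hxZc⟩
    rcases hxH with hxM | hxT
    · exact absurd (hMsub hxM) hxZc
    · exact hxT
  -- the null sets obtained by iterated F-saturation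
  set N : ℕ → Set X := fun k =>
    Nat.rec (toMeasurable μ (Zc \ M)) (fun _ Nk => toMeasurable μ {y | ∃ x ∈ Nk, F x y}) k
    with hNdef
  have hNm : ∀ k, MeasurableSet (N k) := by
    intro k
    cases k with
    | zero => exact measurableSet_toMeasurable _ _
    | succ k => exact measurableSet_toMeasurable _ _
  have hNnull : ∀ k, μ (N k) = 0 := by
    intro k
    induction k with
    | zero => exact hHZc
    | succ k ih =>
      have : μ {y | ∃ x ∈ N k, F x y} = 0 := hqi (N k) (hNm k) ih
      show μ (toMeasurable μ {y | ∃ x ∈ N k, F x y}) = 0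
      rwa [measure_toMeasurable]
  have hNsucc : ∀ k, {y | ∃ x ∈ N k, F x y} ⊆ N (k + 1) := fun k =>
    subset_toMeasurable _ _
  set T : Set X := Hᶜ ∪ ⋃ k, N k with hTdef
  have hTm : MeasurableSet T := hHm.compl.union (MeasurableSet.iUnion hNm)
  have hTinv : ∀ x y, x ∈ T → E x y → y ∈ T := by
    intro x y hx hxy
    rcases hx with hxG | hxN
    · -- x is not in H, hence not in Zc; then y is not in Zc either
      have hxZc : x ∉ Zc := fun h => hxG (hZcH h)
      have hyZc : y ∉ Zc := by
        intro hy
        rcases (hZc y).1 hy with ⟨w, hwB, hFyw, hEyw⟩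
        refine hxZc ((hZc x).2 ⟨w, hwB, hFeq.trans (hEF x y hxy) hFyw, fun h => ?_⟩)
        exact hEyw (hEeq.trans (hEeq.symm hxy) h)
      by_cases hyH : y ∈ H
      · exact Or.inr (mem_iUnion.2 ⟨0, hHdiff ⟨hyH, hyZc⟩⟩)
      · exact Or.inl hyH
    · rcases mem_iUnion.1 hxN with ⟨k, hk⟩
      exact Or.inr (mem_iUnion.2 ⟨k + 1, hNsucc k ⟨x, hk, hEF x y hxy⟩⟩)
  -- the "bad" set
  set bad : Set X := {x | x ∈ B ∧ ¬ ∃ y ∈ B, F x y ∧ ¬ E x y} with hbaddef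
  have hbadZc : ∀ x ∈ bad, x ∉ Zc := by
    rintro x ⟨hxB, hx⟩ hxZc
    rcases (hZc x).1 hxZc with ⟨y, hyB, hFxy, hExy⟩
    exact hx ⟨y, hyB, hFxy, hExy⟩
  have hbadnull : μ bad = 0 := by
    rcases herg T hTm hTinv with hT0 | hTc0
    · -- bad ⊆ T
      refine measure_mono_null (fun x hx => ?_) hT0
      have hxZc : x ∉ Zc := hbadZc x hx
      by_cases hxH : x ∈ H
      · exact Or.inr (mem_iUnion.2 ⟨0, hHdiff ⟨hxH, hxZc⟩⟩)
      · exact Or.inl hxH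
    · -- Zc is contained in the null measurable set V, and bad ⊆ [V]_F
      set V : Set X := Tᶜ ∪ ⋃ k, N k with hVdef
      have hVm : MeasurableSet V := hTm.compl.union (MeasurableSet.iUnion hNm)
      have hVnull : μ V = 0 := by
        refine measure_union_null hTc0 ?_
        exact measure_iUnion_null hNnull
      have hZcV : Zc ⊆ V := by
        intro y hy
        by_cases hyT : y ∈ T
        · rcases hyT with hyG | hyN
          · exact absurd (hZcH hy) hyG
          · exact Or.inr hyN
        · exact Or.inl hyT
      refine measure_mono_null (fun x hx => ?_) (hqi V hVm hVnull)
      obtain ⟨hxB, -⟩ := hx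
      obtain ⟨y, hFxy, hExy⟩ := hproper x
      have hyZc : y ∈ Zc :=
        (hZc y).2 ⟨x, hxB, hFeq.symm hFxy, fun h => hExy (hEeq.symm h)⟩
      exact ⟨y, hZcV hyZc, hFeq.symm hFxy⟩
  rw [ae_iff]
  refine measure_mono_null (fun x hx => ?_) hbadnull
  rw [Set.mem_setOf_eq, _root_.not_imp] at hx
  exact hx
end

section
/- Let X be a Polish space, E a countable Borel equivalence relation on X, μ an E-ergodic Borel probability measure, and F a countable Borel equivalence relation on a Polish space Y. Then E is μ-reducible to F if and only if E is μ-somewhere reducible to F (i.e., there is a μ-positive Borel set on which there is a Borel reduction of E to F). -/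
open MeasureTheory Set Filter Topology ENNReal
namespace Stmt11Aux


/-- Prepend a finite list to an element of Baire space. -/
def pref (l : List ℕ) (σ : ℕ → ℕ) : ℕ → ℕ := fun i =>
  if h : i < l.length then l.get ⟨i, h⟩ else σ (i - l.length)

lemma pref_nil (σ : ℕ → ℕ) : pref [] σ = σ := by
  funext i; simp [pref]

lemma continuous_pref (l : List ℕ) : Continuous fun σ : ℕ → ℕ => pref l σ := by
  apply continuous_pi
  intro i
  by_cases h : i < l.length
  · simpa [pref, h] using continuous_const
  · simpa [pref, h] using continuous_apply (i - l.length)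

/-- cons for Baire space elements -/
def bcons (k : ℕ) (σ : ℕ → ℕ) : ℕ → ℕ := fun i => if i = 0 then k else σ (i - 1)

lemma bcons_shift (σ : ℕ → ℕ) : bcons (σ 0) (fun i => σ (i + 1)) = σ := by
  funext i
  rcases i with _ | i <;> simp [bcons]

lemma pref_append_single (l : List ℕ) (k : ℕ) (σ : ℕ → ℕ) :
    pref (l ++ [k]) σ = pref l (bcons k σ) := by
  funext i
  simp only [pref, bcons, List.length_append, List.length_cons, List.length_nil]
  rcases lt_trichotomy i l.length with h | h | h
  · rw [dif_pos (by omega), dif_pos h]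
    rw [List.get_eq_getElem, List.get_eq_getElem, List.getElem_append_left h]
  · rw [dif_pos (by omega), dif_neg (by omega), if_pos (by omega)]
    rw [List.get_eq_getElem]
    exact List.getElem_concat_length h (by simp [h])
  · rw [dif_neg (by omega), dif_neg (by omega)]
    have h1 : i - l.length ≠ 0 := by omega
    rw [if_neg h1]
    congr 1

lemma range_pref_eq_iUnion {α : Type*} (g : (ℕ → ℕ) → α) (l : List ℕ) :
    range (fun σ => g (pref l σ)) = ⋃ k, range fun σ => g (pref (l ++ [k]) σ) := by
  ext x
  constructor
  · rintro ⟨σ, rfl⟩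
    refine mem_iUnion.2 ⟨σ 0, ⟨fun i => σ (i + 1), ?_⟩⟩
    show g (pref (l ++ [σ 0]) fun i => σ (i+1)) = g (pref l σ)
    rw [pref_append_single, bcons_shift]
  · intro hx
    rcases mem_iUnion.1 hx with ⟨k, σ, rfl⟩
    exact ⟨bcons k σ, by show g (pref l (bcons k σ)) = g (pref (l ++ [k]) σ); rw [pref_append_single]⟩



/-- The set of elements of Baire space bounded by the list `l` on `[0, l.length)`. -/
def SL (l : List ℕ) : Set (ℕ → ℕ) := {σ | ∀ i < l.length, σ i ≤ l.getD i 0}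

lemma SL_nil : SL [] = univ := by
  ext σ; simp [SL]

lemma SL_append (l : List ℕ) (m : ℕ) :
    SL (l ++ [m]) = SL l ∩ {σ | σ l.length ≤ m} := by
  ext σ
  simp only [SL, List.length_append, List.length_cons, List.length_nil, mem_inter_iff,
    mem_setOf_eq]
  constructor
  · intro h
    refine ⟨fun i hi => ?_, ?_⟩
    · have := h i (by omega)
      rwa [List.getD_append _ _ _ _ hi] at this
    · have := h l.length (by omega)
      rwa [List.getD_append_right _ _ _ _ (le_refl _), Nat.sub_self] at this
  · rintro ⟨h1, h2⟩ i hi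
    rcases lt_or_ge i l.length with h | h
    · rw [List.getD_append _ _ _ _ h]; exact h1 i h
    · have : i = l.length := by omega
      subst this
      rwa [List.getD_append_right _ _ _ _ (le_refl _), Nat.sub_self]

lemma SL_append_subset (l : List ℕ) (m : ℕ) : SL (l ++ [m]) ⊆ SL l := by
  rw [SL_append]; exact inter_subset_left

lemma SL_iUnion (l : List ℕ) : SL l = ⋃ m, SL (l ++ [m]) := by
  ext σ
  constructor
  · intro h
    exact mem_iUnion.2 ⟨σ l.length, by rw [SL_append]; exact ⟨h, show σ l.length ≤ σ l.length from le_rfl⟩⟩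
  · intro h
    rcases mem_iUnion.1 h with ⟨m, hm⟩
    exact SL_append_subset l m hm

lemma SL_closed (l : List ℕ) : IsClosed (SL l) := by
  have : SL l = ⋂ (i : ℕ) (_ : i < l.length), (fun σ : ℕ → ℕ => σ i) ⁻¹' Iic (l.getD i 0) := by
    ext σ; simp [SL]
  rw [this]
  exact isClosed_iInter fun i => isClosed_iInter fun _ =>
    IsClosed.preimage (continuous_apply i) isClosed_Iic

variable {α : Type*} [TopologicalSpace α] [PolishSpace α] [MeasurableSpace α] [BorelSpace α]

/-- Measure-theoretic capacitability for analytic sets presented as continuous images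
of Baire space: they contain Borel subsets of almost full outer measure. -/
theorem cap_range (μ : Measure α) [IsFiniteMeasure μ] {g : (ℕ → ℕ) → α} (hg : Continuous g)
    {ε : ℝ≥0∞} (hε : ε ≠ 0) :
    ∃ B : Set α, MeasurableSet B ∧ B ⊆ range g ∧ μ (range g) ≤ μ B + ε := by
  letI := TopologicalSpace.upgradeIsCompletelyMetrizable α
  have pick : ∀ l : List ℕ, ∃ m : ℕ,
      μ (g '' SL l) ≤ μ (g '' SL (l ++ [m])) + ε / 2 ^ (l.length + 1) := by
    intro l
    by_cases h0 : μ (g '' SL l) = 0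
    · exact ⟨0, by rw [h0]; exact zero_le⟩
    have hδ : (0:ℝ≥0∞) < ε / 2 ^ (l.length + 1) :=
      ENNReal.div_pos hε (by exact ENNReal.pow_ne_top (by norm_num))
    have hU : g '' SL l = ⋃ m, g '' SL (l ++ [m]) := by
      rw [← image_iUnion, ← SL_iUnion]
    have hmono : Monotone fun m => g '' SL (l ++ [m]) := by
      intro m m' hmm
      apply image_mono
      rw [SL_append, SL_append]
      exact inter_subset_inter_right _ fun σ hσ => le_trans hσ hmm
    have hsup : μ (g '' SL l) = ⨆ m, μ (g '' SL (l ++ [m])) := by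
      rw [hU]; exact hmono.measure_iUnion
    have hlt : μ (g '' SL l) - ε / 2 ^ (l.length + 1) < ⨆ m, μ (g '' SL (l ++ [m])) := by
      rw [← hsup]
      exact ENNReal.sub_lt_self (measure_ne_top μ _) h0 hδ.ne'
    obtain ⟨m, hm⟩ := lt_iSup_iff.1 hlt
    exact ⟨m, tsub_le_iff_right.1 hm.le⟩
  choose pickf hpick using pick
  set bl : ℕ → List ℕ := fun n => Nat.rec [] (fun _ l => l ++ [pickf l]) n with hbl
  have hblsucc : ∀ n, bl (n + 1) = bl n ++ [pickf (bl n)] := fun n => rfl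
  have hlen : ∀ n, (bl n).length = n := by
    intro n
    induction n with
    | zero => rfl
    | succ n ih => rw [hblsucc, List.length_append, ih]; rfl
  have hsum : ∀ n : ℕ, (∑ i ∈ Finset.range n, ε / 2 ^ (i + 1)) ≤ ε := by
    intro n
    calc (∑ i ∈ Finset.range n, ε / 2 ^ (i + 1)) ≤ ∑' i : ℕ, ε / 2 ^ (i + 1) :=
          ENNReal.sum_le_tsum _
      _ = ε * ∑' i : ℕ, (2⁻¹ : ℝ≥0∞) ^ (i + 1) := by
          rw [← ENNReal.tsum_mul_left]
          congr 1; funext i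
          rw [div_eq_mul_inv, ENNReal.inv_pow]
      _ = ε := by
          rw [ENNReal.tsum_geometric_add_one, ENNReal.one_sub_inv_two,
            ENNReal.mul_inv_cancel (by norm_num) (by norm_num), mul_one]
  have inv : ∀ n : ℕ, μ (range g) ≤ μ (g '' SL (bl n)) + ∑ i ∈ Finset.range n, ε / 2 ^ (i + 1) := by
    intro n
    induction n with
    | zero =>
        rw [show bl 0 = [] from rfl, SL_nil, image_univ]
        simp
    | succ n ih =>
        have h1 := hpick (bl n)
        rw [hlen n] at h1
        calc μ (range g) ≤ μ (g '' SL (bl n)) + ∑ i ∈ Finset.range n, ε / 2 ^ (i + 1) := ih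
          _ ≤ (μ (g '' SL (bl (n + 1))) + ε / 2 ^ (n + 1)) +
              ∑ i ∈ Finset.range n, ε / 2 ^ (i + 1) :=
              add_le_add_left (by rw [hblsucc]; exact h1) _
          _ = μ (g '' SL (bl (n + 1))) + ∑ i ∈ Finset.range (n + 1), ε / 2 ^ (i + 1) := by
              rw [Finset.sum_range_succ]
              ring
  refine ⟨⋂ n, closure (g '' SL (bl n)), MeasurableSet.iInter fun n =>
    isClosed_closure.measurableSet, ?_, ?_⟩
  · -- B ⊆ range g
    intro x hx
    have hsel : ∀ n : ℕ, ∃ σ, σ ∈ SL (bl n) ∧ dist (g σ) x < 1 / (n + 1) := by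
      intro n
      have hx' : x ∈ closure (g '' SL (bl n)) := mem_iInter.1 hx n
      have hpos : (0:ℝ) < 1 / (n + 1) := by positivity
      obtain ⟨b, hb, hdist⟩ := Metric.mem_closure_iff.1 hx' _ hpos
      obtain ⟨σ, hσ, rfl⟩ := hb
      exact ⟨σ, hσ, by rwa [dist_comm]⟩
    choose σs hσSL hσd using hsel
    have hgetD : ∀ n i, i < n → (bl n).getD i 0 = (bl (i + 1)).getD i 0 := by
      intro n
      induction n with
      | zero => omega
      | succ n ih =>
          intro i hi
          rcases lt_or_ge i n with h | h
          · rw [hblsucc, List.getD_append _ _ _ _ (by rw [hlen]; exact h)]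
            exact ih i h
          · have : i = n := by omega
            subst this
            rfl
    have hσb : ∀ n i, i < n → σs n i ≤ (bl (i + 1)).getD i 0 := by
      intro n i h
      rw [← hgetD n i h]
      exact hσSL n i (by rw [hlen]; exact h)
    set Bd : ℕ → ℕ := fun i =>
      max ((bl (i + 1)).getD i 0) (Finset.sup (Finset.range (i + 1)) fun n => σs n i) with hBdDef
    have hBd : ∀ n i, σs n i ≤ Bd i := by
      intro n i
      rcases lt_or_ge i n with h | h
      · exact le_trans (hσb n i h) (le_max_left _ _)
      · refine le_trans (Finset.le_sup (f := fun n => σs n i)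
          (Finset.mem_range.2 (by omega : n < i + 1))) (le_max_right _ _)
    set Z : ℕ → Set (ℕ → ℕ) := fun n =>
      (univ.pi fun i => Iic (Bd i)) ∩ (SL (bl n) ∩ {τ | dist (g τ) x ≤ 1 / (n + 1)}) with hZdef
    have hZclosed : ∀ n, IsClosed (Z n) := by
      intro n
      refine (isClosed_set_pi fun i _ => isClosed_Iic).inter ((SL_closed _).inter ?_)
      exact isClosed_le (Continuous.dist hg continuous_const) continuous_const
    have hZdec : ∀ n, Z (n + 1) ⊆ Z n := by
      intro n
      refine inter_subset_inter_right _ (inter_subset_inter ?_ ?_)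
      · rw [hblsucc]; exact SL_append_subset _ _
      · intro τ hτ
        simp only [mem_setOf_eq] at hτ ⊢
        refine le_trans hτ ?_
        rw [div_le_div_iff₀ (by positivity) (by positivity)]
        push_cast
        nlinarith
    have hZne : ∀ n, (Z n).Nonempty := by
      intro n
      refine ⟨σs n, ?_, hσSL n, (hσd n).le⟩
      intro i _
      exact hBd n i
    have hZ0 : IsCompact (Z 0) := by
      apply IsCompact.inter_right _ ((SL_closed _).inter
        (isClosed_le (Continuous.dist hg continuous_const) continuous_const))
      exact isCompact_univ_pi fun i => (finite_Iic (Bd i)).isCompact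
    obtain ⟨τ, hτ⟩ := IsCompact.nonempty_iInter_of_sequence_nonempty_isCompact_isClosed
      Z hZdec hZne hZ0 hZclosed
    have hd : ∀ n : ℕ, dist (g τ) x ≤ 1 / (n + 1) := fun n => (mem_iInter.1 hτ n).2.2
    have h0 : dist (g τ) x = 0 := by
      by_contra hne
      have hpos : 0 < dist (g τ) x := lt_of_le_of_ne dist_nonneg (Ne.symm hne)
      obtain ⟨n, hn⟩ := exists_nat_one_div_lt hpos
      exact absurd (hd n) (not_le.2 (by exact_mod_cast hn))
    exact ⟨τ, dist_eq_zero.1 h0⟩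
  · -- measure bound
    have hanti : Antitone fun n => closure (g '' SL (bl n)) := by
      apply antitone_nat_of_succ_le
      intro n
      apply closure_mono
      apply image_mono
      rw [hblsucc]
      exact SL_append_subset _ _
    have hμB : μ (⋂ n, closure (g '' SL (bl n))) = ⨅ n, μ (closure (g '' SL (bl n))) :=
      hanti.measure_iInter (fun n => isClosed_closure.measurableSet.nullMeasurableSet)
        ⟨0, measure_ne_top μ _⟩
    have h1 : ∀ n, μ (range g) - ε ≤ μ (closure (g '' SL (bl n))) := by
      intro n
      refine tsub_le_iff_right.2 ((inv n).trans ?_)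
      exact add_le_add (measure_mono subset_closure) (hsum n)
    calc μ (range g) ≤ (μ (range g) - ε) + ε := le_tsub_add
      _ ≤ μ (⋂ n, closure (g '' SL (bl n))) + ε := by
          rw [hμB]
          exact add_le_add_left (le_iInf h1) ε



lemma measurableSet_sInf_eq {β : Type*} [MeasurableSpace β] (S : β → Set ℕ)
    (hS : ∀ k, MeasurableSet {y | k ∈ S y}) (k : ℕ) :
    MeasurableSet {y | sInf (S y) = k} := by
  by_cases hk : k = 0
  · subst hk
    have : {y | sInf (S y) = 0} = {y | 0 ∈ S y} ∪ ⋂ j, {y | j ∈ S y}ᶜ := by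
      ext y
      simp only [mem_setOf_eq, mem_union, mem_iInter, mem_compl_iff, Nat.sInf_eq_zero]
      rw [eq_empty_iff_forall_notMem]
    rw [this]
    exact (hS 0).union (MeasurableSet.iInter fun j => (hS j).compl)
  · have : {y | sInf (S y) = k} = {y | k ∈ S y} ∩ ⋂ (j : ℕ) (_ : j < k), {y | j ∈ S y}ᶜ := by
      ext y
      simp only [mem_setOf_eq, mem_inter_iff, mem_iInter, mem_compl_iff]
      constructor
      · intro hy
        have hne : (S y).Nonempty := by
          by_contra hne
          rw [not_nonempty_iff_eq_empty] at hne
          rw [hne, Nat.sInf_empty] at hy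
          exact hk hy.symm
        exact ⟨hy ▸ Nat.sInf_mem hne, fun j hj => Nat.notMem_of_lt_sInf (hy ▸ hj)⟩
      · rintro ⟨hmem, hlt⟩
        refine le_antisymm (Nat.sInf_le hmem) ?_
        by_contra hcon
        push_neg at hcon
        exact hlt _ hcon (Nat.sInf_mem ⟨k, hmem⟩)
    rw [this]
    exact (hS k).inter (MeasurableSet.iInter fun j => MeasurableSet.iInter fun _ => (hS j).compl)

variable {α : Type*} [TopologicalSpace α] [PolishSpace α] [MeasurableSpace α] [BorelSpace α]

theorem analytic_approx (μ : Measure α) [IsFiniteMeasure μ] {g : (ℕ → ℕ) → α}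
    (hg : Continuous g) :
    ∃ B Z : Set α, MeasurableSet B ∧ MeasurableSet Z ∧ μ Z = 0 ∧ B ⊆ range g ∧
      range g \ B ⊆ Z := by
  have h : ∀ n : ℕ, ∃ B : Set α, MeasurableSet B ∧ B ⊆ range g ∧
      μ (range g) ≤ μ B + ((n : ℝ≥0∞) + 1)⁻¹ := by
    intro n
    exact cap_range μ hg (ENNReal.inv_ne_zero.2 (by simp))
  choose Bn hmeas hsub hle using h
  set B : Set α := ⋃ n, Bn n with hBdef
  have hBmeas : MeasurableSet B := .iUnion hmeas
  have hBsub : B ⊆ range g := iUnion_subset hsub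
  have hle' : μ (range g) ≤ μ B := by
    apply ENNReal.le_of_forall_pos_le_add
    intro δ hδ _
    obtain ⟨n, hn⟩ := ENNReal.exists_inv_nat_lt (a := (δ : ℝ≥0∞)) (by exact_mod_cast hδ.ne')
    have h1 : ((n : ℝ≥0∞) + 1)⁻¹ ≤ δ := by
      refine le_trans (ENNReal.inv_le_inv.2 (le_add_of_nonneg_right zero_le_one)) hn.le
    calc μ (range g) ≤ μ (Bn n) + ((n : ℝ≥0∞) + 1)⁻¹ := hle n
      _ ≤ μ B + δ := add_le_add (measure_mono (subset_iUnion Bn n)) h1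
  refine ⟨B, toMeasurable μ (toMeasurable μ (range g) \ B), hBmeas,
    measurableSet_toMeasurable _ _, ?_, hBsub, ?_⟩
  · rw [measure_toMeasurable]
    have hsub2 : B ⊆ toMeasurable μ (range g) := hBsub.trans (subset_toMeasurable _ _)
    rw [measure_diff hsub2 hBmeas.nullMeasurableSet (measure_ne_top μ _),
      measure_toMeasurable]
    exact tsub_eq_zero_of_le hle'
  · exact (diff_subset_diff_left (subset_toMeasurable _ _)).trans (subset_toMeasurable _ _)


end Stmt11Aux

open MeasureTheory Set Filter Topology Stmt11Aux

/-- For an `E`-quasi-invariant `E`-ergodic measure, `μ`-reducibility of `E`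
to `F` is equivalent to `μ`-somewhere reducibility. -/
theorem stmt_11 {X Y : Type*} [TopologicalSpace X] [PolishSpace X]
    [MeasurableSpace X] [BorelSpace X]
    [TopologicalSpace Y] [PolishSpace Y] [MeasurableSpace Y] [BorelSpace Y]
    (E : X → X → Prop) (hEeq : Equivalence E)
    (hEmeas : MeasurableSet {p : X × X | E p.1 p.2})
    (hEcount : ∀ x : X, {y | E x y}.Countable)
    (F : Y → Y → Prop) (hFeq : Equivalence F)
    (hFmeas : MeasurableSet {p : Y × Y | F p.1 p.2})
    (hFcount : ∀ y : Y, {z | F y z}.Countable)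
    (μ : Measure X) [IsProbabilityMeasure μ]
    (hqi : ∀ A : Set X, MeasurableSet A → μ A = 0 → μ {y | ∃ x ∈ A, E x y} = 0)
    (herg : ∀ B : Set X, MeasurableSet B → (∀ x y, x ∈ B → E x y → y ∈ B) →
      μ B = 0 ∨ μ Bᶜ = 0) :
    (∃ C : Set X, MeasurableSet C ∧ μ Cᶜ = 0 ∧
      ∃ f : X → Y, Measurable f ∧ ∀ x ∈ C, ∀ x' ∈ C, (E x x' ↔ F (f x) (f x'))) ↔
    (∃ C : Set X, MeasurableSet C ∧ μ C ≠ 0 ∧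
      ∃ f : X → Y, Measurable f ∧ ∀ x ∈ C, ∀ x' ∈ C, (E x x' ↔ F (f x) (f x'))) := by
  constructor
  · rintro ⟨C, hC, hCco, f, hf, hred⟩
    refine ⟨C, hC, ?_, f, hf, hred⟩
    have h := measure_add_measure_compl (μ := μ) hC
    rw [hCco, add_zero, measure_univ] at h
    rw [h]
    exact one_ne_zero
  · rintro ⟨C, hC, hCpos, f, hf, hred⟩
    obtain ⟨x₀, hx₀⟩ := nonempty_of_measure_ne_zero hCpos
    set R : Set (X × X) := {p | p.2 ∈ C ∧ E p.2 p.1} with hRdef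
    have hRmeas : MeasurableSet R := by
      have h1 : MeasurableSet {p : X × X | p.2 ∈ C} := hC.preimage measurable_snd
      have h2 : MeasurableSet {p : X × X | E p.2 p.1} :=
        hEmeas.preimage measurable_swap
      exact h1.inter h2
    have hRanal : AnalyticSet R := hRmeas.analyticSet
    rw [MeasureTheory.AnalyticSet_def] at hRanal
    rcases hRanal with hemp | ⟨h, hcont, hrange⟩
    · exact absurd hemp (Nonempty.ne_empty ⟨(x₀, x₀), hx₀, hEeq.refl x₀⟩)
    set P : List ℕ → Set X := fun l => range fun σ => (h (pref l σ)).1 with hPdef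
    have hPcont : ∀ l, Continuous fun σ : ℕ → ℕ => (h (pref l σ)).1 := fun l =>
      continuous_fst.comp (hcont.comp (continuous_pref l))
    have happrox : ∀ l : List ℕ, ∃ B Z : Set X, MeasurableSet B ∧ MeasurableSet Z ∧
        μ Z = 0 ∧ B ⊆ P l ∧ P l \ B ⊆ Z := fun l => analytic_approx μ (hPcont l)
    choose Bs Zs hBmeas hZmeas hZnull hBsub hPZ using happrox
    have hPcover : ∀ l, P l = ⋃ k, P (l ++ [k]) := fun l =>
      range_pref_eq_iUnion (fun τ => (h τ).1) l
    have hPzeroMem : ∀ y, y ∈ P [] ↔ ∃ x ∈ C, E x y := by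
      intro y
      constructor
      · rintro ⟨σ, hσ⟩
        replace hσ : (h σ).1 = y := by
          rw [← pref_nil σ]; exact hσ
        have hmem : h σ ∈ R := hrange ▸ mem_range_self σ
        exact ⟨(h σ).2, hmem.1, hσ ▸ hmem.2⟩
      · rintro ⟨x, hxC, hxy⟩
        have hmem : (y, x) ∈ R := ⟨hxC, hxy⟩
        rw [← hrange] at hmem
        obtain ⟨σ, hσ⟩ := hmem
        exact ⟨σ, by show (h (pref [] σ)).1 = y; rw [pref_nil, hσ]⟩
    set L : X → ℕ → List ℕ :=
      fun y n => Nat.rec [] (fun _ l => l ++ [sInf {k | y ∈ Bs (l ++ [k])}]) n with hLdef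
    set σ' : X → ℕ → ℕ := fun y n => sInf {k | y ∈ Bs (L y n ++ [k])} with hσdef
    have hLsucc : ∀ y n, L y (n + 1) = L y n ++ [σ' y n] := fun y n => rfl
    have hLzero : ∀ y, L y 0 = [] := fun y => rfl
    have hLlen : ∀ y n, (L y n).length = n := by
      intro y n
      induction n with
      | zero => rfl
      | succ n ih => rw [hLsucc, List.length_append, ih]; rfl
    have hLmeas : ∀ n l, MeasurableSet {y | L y n = l} := by
      intro n
      induction n with
      | zero =>
          intro l
          by_cases hl : l = []
          · have : {y : X | L y 0 = l} = univ := by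
              ext y; simp [hLzero, hl]
            rw [this]; exact MeasurableSet.univ
          · have : {y : X | L y 0 = l} = ∅ := by
              ext y; simp only [mem_setOf_eq, mem_empty_iff_false, iff_false]
              rw [hLzero]; exact fun hc => hl hc.symm
            rw [this]; exact MeasurableSet.empty
      | succ n ih =>
          intro l
          have hset : {y | L y (n + 1) = l} = ⋃ (l' : List ℕ) (k : ℕ) (_ : l' ++ [k] = l),
              ({y | L y n = l'} ∩ {y | sInf {k' | y ∈ Bs (l' ++ [k'])} = k}) := by
            ext y
            simp only [mem_iUnion, mem_inter_iff, mem_setOf_eq]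
            constructor
            · intro hy
              exact ⟨L y n, σ' y n, by rw [← hLsucc]; exact hy, rfl, rfl⟩
            · rintro ⟨l', k, hlk, hL, hk⟩
              rw [hLsucc, hL]
              rw [hσdef]
              simp only
              rw [hL, hk, hlk]
          rw [hset]
          refine MeasurableSet.iUnion fun l' => MeasurableSet.iUnion fun k =>
            MeasurableSet.iUnion fun _ => (ih l').inter ?_
          exact measurableSet_sInf_eq (fun y => {k' | y ∈ Bs (l' ++ [k'])})
            (fun k' => hBmeas _) k
    have hσmeas : ∀ n, Measurable fun y => σ' y n := by
      intro n
      apply measurable_to_countable'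
      intro k
      have hset : (fun y => σ' y n) ⁻¹' {k} = ⋃ (l' : List ℕ),
          {y | L y n = l'} ∩ {y | sInf {k' | y ∈ Bs (l' ++ [k'])} = k} := by
        ext y
        simp only [mem_preimage, mem_singleton_iff, mem_iUnion, mem_inter_iff, mem_setOf_eq]
        constructor
        · intro hy
          exact ⟨L y n, rfl, hy⟩
        · rintro ⟨l', hL, hk⟩
          rw [hσdef]; simp only; rw [hL]; exact hk
      rw [hset]
      exact MeasurableSet.iUnion fun l' => (hLmeas n l').inter
        (measurableSet_sInf_eq (fun y => {k' | y ∈ Bs (l' ++ [k'])}) (fun k' => hBmeas _) k)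
    have hσpi : Measurable fun y => (σ' y : ℕ → ℕ) := measurable_pi_lambda _ hσmeas
    set s' : X → X := fun y => (h (σ' y)).2 with hs'def
    have hs'meas : Measurable s' := measurable_snd.comp (hcont.measurable.comp hσpi)
    set Zall : Set X := ⋃ l : List ℕ, Zs l with hZalldef
    have hZallmeas : MeasurableSet Zall := .iUnion fun l => hZmeas l
    have hZallnull : μ Zall = 0 := measure_iUnion_null fun l => hZnull l
    have hGood : ∀ y, y ∈ Bs [] → y ∉ Zall → s' y ∈ C ∧ E (s' y) y := by
      intro y hyB hyZ
      have hiff : ∀ l, y ∈ Bs l ↔ y ∈ P l := by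
        intro l
        refine ⟨fun hb => hBsub l hb, fun hP => ?_⟩
        by_contra hB
        exact hyZ (mem_iUnion.2 ⟨l, hPZ l ⟨hP, hB⟩⟩)
      have hinv : ∀ n, y ∈ Bs (L y n) := by
        intro n
        induction n with
        | zero => exact hyB
        | succ n ih =>
            have hP : y ∈ P (L y n) := (hiff _).1 ih
            rw [hPcover] at hP
            obtain ⟨k, hk⟩ := mem_iUnion.1 hP
            have hkB : y ∈ Bs (L y n ++ [k]) := (hiff _).2 hk
            have hmem : σ' y n ∈ {k' | y ∈ Bs (L y n ++ [k'])} := Nat.sInf_mem ⟨k, hkB⟩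
            rw [hLsucc]
            exact hmem
      have hpre : ∀ n i, i < n → (L y n).getD i 0 = σ' y i := by
        intro n
        induction n with
        | zero => intro i hi; omega
        | succ n ih =>
            intro i hi
            rcases lt_or_ge i n with hlt | hge
            · rw [hLsucc, List.getD_append _ _ _ _ (by rw [hLlen]; exact hlt)]
              exact ih i hlt
            · have hieq : i = n := by omega
              subst hieq
              rw [hLsucc, List.getD_append_right _ _ _ _ (by rw [hLlen])]
              rw [hLlen, Nat.sub_self]
              rfl
      have hfirst : (h (σ' y)).1 = y := by
        have hwit : ∀ n, ∃ τ : ℕ → ℕ, (h (pref (L y n) τ)).1 = y := fun n => (hiff _).1 (hinv n)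
        choose τs hτs using hwit
        have htend : Tendsto (fun n => pref (L y n) (τs n)) atTop (𝓝 (σ' y)) := by
          rw [tendsto_pi_nhds]
          intro i
          refine Tendsto.congr' ?_ tendsto_const_nhds
          filter_upwards [eventually_ge_atTop (i + 1)] with n hn
          have hi : i < (L y n).length := by rw [hLlen]; omega
          simp only [pref, dif_pos hi]
          rw [List.get_eq_getElem, ← List.getD_eq_getElem (L y n) 0 hi]
          exact (hpre n i (by omega)).symm
        have h1 : Tendsto (fun n => (h (pref (L y n) (τs n))).1) atTop (𝓝 ((h (σ' y)).1)) :=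
          ((continuous_fst.comp hcont).tendsto _).comp htend
        have h2 : Tendsto (fun n => (h (pref (L y n) (τs n))).1) atTop (𝓝 y) := by
          have : (fun n => (h (pref (L y n) (τs n))).1) = fun _ => y := funext hτs
          rw [this]
          exact tendsto_const_nhds
        exact tendsto_nhds_unique h1 h2
      have hmemR : h (σ' y) ∈ R := hrange ▸ mem_range_self _
      refine ⟨hmemR.1, ?_⟩
      have := hmemR.2
      rwa [hfirst] at this
    set sat : Set X → Set X := fun A => {y | ∃ x ∈ A, E x y} with hsatdef
    set N : ℕ → Set X := fun k =>
      Nat.rec (toMeasurable μ Zall) (fun _ s => toMeasurable μ (sat s)) k with hNdef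
    have hNzero : N 0 = toMeasurable μ Zall := rfl
    have hNsucc : ∀ k, N (k + 1) = toMeasurable μ (sat (N k)) := fun k => rfl
    have hNmeas : ∀ k, MeasurableSet (N k) := by
      intro k
      cases k with
      | zero => rw [hNzero]; exact measurableSet_toMeasurable _ _
      | succ k => rw [hNsucc]; exact measurableSet_toMeasurable _ _
    have hNnull : ∀ k, μ (N k) = 0 := by
      intro k
      induction k with
      | zero => rw [hNzero, measure_toMeasurable]; exact hZallnull
      | succ k ih =>
          rw [hNsucc, measure_toMeasurable]
          exact hqi (N k) (hNmeas k) ih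
    set M : Set X := ⋃ k, N k with hMdef
    have hMmeas : MeasurableSet M := .iUnion hNmeas
    have hMnull : μ M = 0 := measure_iUnion_null hNnull
    have hMinv : ∀ x y, x ∈ M → E x y → y ∈ M := by
      intro x y hx hxy
      obtain ⟨k, hk⟩ := mem_iUnion.1 hx
      exact mem_iUnion.2 ⟨k + 1, by rw [hNsucc]; exact subset_toMeasurable _ _ ⟨x, hk, hxy⟩⟩
    have hZM : Zall ⊆ M := by
      refine subset_trans (subset_toMeasurable μ Zall) ?_
      rw [← hNzero]
      exact subset_iUnion N 0
    set T : Set X := Bs [] \ M with hTdef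
    have hTmeas : MeasurableSet T := (hBmeas []).diff hMmeas
    have hSinv : ∀ x y, x ∈ P [] → E x y → y ∈ P [] := by
      intro x y hx hxy
      rw [hPzeroMem] at hx ⊢
      obtain ⟨c, hc, hcx⟩ := hx
      exact ⟨c, hc, hEeq.trans hcx hxy⟩
    have hTinv : ∀ x y, x ∈ T → E x y → y ∈ T := by
      intro x y hx hxy
      have hxP : x ∈ P [] := hBsub [] hx.1
      have hyP : y ∈ P [] := hSinv x y hxP hxy
      have hyM : y ∉ M := fun hyM => hx.2 (hMinv y x hyM (hEeq.symm hxy))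
      have hyB : y ∈ Bs [] := by
        by_contra hyB
        exact hyM (hZM (mem_iUnion.2 ⟨[], hPZ [] ⟨hyP, hyB⟩⟩))
      exact ⟨hyB, hyM⟩
    have hTpos : μ T ≠ 0 := by
      have hCsub : C \ M ⊆ T := by
        intro c hc
        have hcP : c ∈ P [] := (hPzeroMem c).2 ⟨c, hc.1, hEeq.refl c⟩
        refine ⟨?_, hc.2⟩
        by_contra hcB
        exact hc.2 (hZM (mem_iUnion.2 ⟨[], hPZ [] ⟨hcP, hcB⟩⟩))
      intro hT0
      apply hCpos
      have hCM : μ (C \ M) = 0 := measure_mono_null hCsub hT0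
      rw [← measure_diff_null hMnull]
      exact hCM
    have hTco : μ Tᶜ = 0 := (herg T hTmeas hTinv).resolve_left hTpos
    refine ⟨T, hTmeas, hTco, fun y => f (s' y), hf.comp hs'meas, ?_⟩
    intro y hy y' hy'
    obtain ⟨hyC, hyE⟩ := hGood y hy.1 (fun hz => hy.2 (hZM hz))
    obtain ⟨hy'C, hy'E⟩ := hGood y' hy'.1 (fun hz => hy'.2 (hZM hz))
    constructor
    · intro hEyy'
      exact (hred (s' y) hyC (s' y') hy'C).1
        (hEeq.trans hyE (hEeq.trans hEyy' (hEeq.symm hy'E)))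
    · intro hF
      exact hEeq.trans (hEeq.symm hyE)
        (hEeq.trans ((hred (s' y) hyC (s' y') hy'C).2 hF) hy'E)
end

section
/- Let X be a Polish space and E the orbit equivalence relation of a Borel action of a countable group Γ on X. Suppose T₀ : X → X is a Borel automorphism with graph contained in E whose orbit equivalence relation E₀ is aperiodic. If G is an acyclic Borel graph contained in E containing the graph of T₀, and L ⊆ E is an antisymmetric irreflexive Borel set disjoint from the graph of T₀^{±1} such that every point has in-degree and out-degree exactly one in L, then, letting T₁ be the Borel automorphism with graph L, the action of the free group F₂ = ⟨a, b⟩ on X defined by a·x = T₀(x), b·x = T₁(x) is free, provided that the graph generated by the graphs of T₀ and T₁ (i.e., symmetrizations of their graphs) is contained in an acyclic graph. -/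
open MeasureTheory

/-- A graph (set of edges) on `X` is acyclic if it admits no cycle: a sequence
`x 0, …, x n` with `n ≥ 3`, consecutive points adjacent, `x 0, …, x (n-1)` injective,
and `x n = x 0`. -/
def IsAcyclicGraph {X : Type*} (G : Set (X × X)) : Prop :=
  ¬ ∃ (n : ℕ) (x : ℕ → X), 3 ≤ n ∧ (∀ i < n, (x i, x (i + 1)) ∈ G) ∧
    Set.InjOn x (Set.Iio n) ∧ x n = x 0

/-- A non-backtracking walk of positive length in an acyclic irreflexive graph
does not return to its starting point. -/
lemma noBacktrackWalk {X : Type*} {H : Set (X × X)} (hH : IsAcyclicGraph H)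
    (hirr : ∀ x : X, (x, x) ∉ H) (y : ℕ → X) (k : ℕ) (hk : 1 ≤ k)
    (hedge : ∀ i < k, (y i, y (i + 1)) ∈ H)
    (hnb : ∀ i, i + 2 ≤ k → y (i + 2) ≠ y i) : y k ≠ y 0 := by
  intro h
  classical
  have hP : ∃ j, j ≤ k ∧ ∃ i < j, y i = y j := ⟨k, le_rfl, 0, hk, h.symm⟩
  let j := Nat.find hP
  obtain ⟨hjk, i, hij, hyij⟩ : j ≤ k ∧ ∃ i < j, y i = y j := Nat.find_spec hP
  have hmin : ∀ j' < j, ¬ (j' ≤ k ∧ ∃ i < j', y i = y j') := fun j' hj' => Nat.find_min hP hj'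
  have hinj : Set.InjOn y (Set.Iio j) := by
    intro a ha b hb hab
    by_contra hne
    rcases Nat.lt_or_ge a b with hlt | hge
    · exact hmin b hb ⟨le_of_lt (lt_of_lt_of_le hb hjk), a, hlt, hab⟩
    · have : b < a := lt_of_le_of_ne hge (fun e => hne e.symm)
      exact hmin a ha ⟨le_of_lt (lt_of_lt_of_le ha hjk), b, this, hab.symm⟩
  rcases Nat.lt_or_ge (j - i) 3 with hsmall | hbig
  · interval_cases h3 : (j - i)
    · omega
    · have hj : j = i + 1 := by omega
      have := hedge i (by omega)
      rw [← hj, ← hyij] at this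
      exact hirr _ this
    · have hj : j = i + 2 := by omega
      exact hnb i (by omega) (by rw [← hj]; exact hyij.symm)
  · apply hH
    refine ⟨j - i, fun m => y (i + m), hbig, ?_, ?_, ?_⟩
    · intro m hm
      have : i + m < k := by omega
      have := hedge (i + m) this
      simpa [Nat.add_assoc] using this
    · intro m₁ hm₁ m₂ hm₂ he
      have h1 : i + m₁ < j := by simp at hm₁; omega
      have h2 : i + m₂ < j := by simp at hm₂; omega
      have := hinj (Set.mem_Iio.2 h1) (Set.mem_Iio.2 h2) he
      omega
    · have : i + (j - i) = j := by omega
      simp only []; rw [this, ← hyij, Nat.add_zero]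

/-- If `T₀` generates an aperiodic equivalence relation, its graph lies in an
acyclic Borel graph `G ⊆ E`, and `L ⊆ E` is an irreflexive antisymmetric Borel set, disjoint
from the graphs of `T₀` and `T₀⁻¹`, which is the graph of an automorphism `T₁` (every point
having in- and out-degree exactly one), then—provided the symmetrized graphs of `T₀` and
`T₁` lie in an acyclic graph—the action of the free group `F₂` sending the generators to
`T₀` and `T₁` is free. -/
theorem stmt_17 {X : Type*} [TopologicalSpace X] [PolishSpace X]
    [MeasurableSpace X] [BorelSpace X]
    (Γ : Type*) [Group Γ] [Countable Γ]
    (a : Γ → X → X) (ha : ∀ γ, Measurable (a γ))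
    (hone : ∀ x, a 1 x = x) (hmul : ∀ γ δ x, a (γ * δ) x = a γ (a δ x))
    (E : X → X → Prop) (hE : ∀ x y, E x y ↔ ∃ γ, a γ x = y)
    (T₀ T₁ : Equiv.Perm X)
    (hT₀ : Measurable ⇑T₀) (hT₀' : Measurable ⇑T₀.symm)
    (hT₁ : Measurable ⇑T₁) (hT₁' : Measurable ⇑T₁.symm)
    (hT₀E : ∀ x, E x (T₀ x))
    (haper : ∀ x : X, {y | ∃ n : ℤ, (T₀ ^ n) x = y}.Infinite)
    (G : Set (X × X)) (hGmeas : MeasurableSet G)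
    (hGsymm : ∀ x y, (x, y) ∈ G → (y, x) ∈ G)
    (hGirr : ∀ x, (x, x) ∉ G)
    (hGE : ∀ p ∈ G, E p.1 p.2)
    (hGacyclic : IsAcyclicGraph G)
    (hT₀G : ∀ x, (x, T₀ x) ∈ G)
    (L : Set (X × X)) (hLmeas : MeasurableSet L)
    (hLE : ∀ p ∈ L, E p.1 p.2)
    (hLirr : ∀ x, (x, x) ∉ L)
    (hLanti : ∀ x y, (x, y) ∈ L → (y, x) ∉ L)
    (hLdisj : ∀ x, (x, T₀ x) ∉ L ∧ (T₀ x, x) ∉ L)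
    (hLout : ∀ x, ∃! y, (x, y) ∈ L)
    (hLin : ∀ y, ∃! x, (x, y) ∈ L)
    (hT₁L : ∀ x y, T₁ x = y ↔ (x, y) ∈ L)
    (hacyclic : ∃ H : Set (X × X), IsAcyclicGraph H ∧
      (∀ x y, (x, y) ∈ H → (y, x) ∈ H) ∧ (∀ x, (x, x) ∉ H) ∧
      ∀ x, (x, T₀ x) ∈ H ∧ (x, T₁ x) ∈ H) :
    ∀ g : FreeGroup (Fin 2), g ≠ 1 →
      ∀ x : X, (FreeGroup.lift (fun i : Fin 2 => if i = 0 then T₀ else T₁) g) x ≠ x := by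
  classical
  obtain ⟨H, hHacyc, hHsymm, hHirr, hHedges⟩ := hacyclic
  set f : Fin 2 → Equiv.Perm X := fun i => if i = 0 then T₀ else T₁ with hf
  set σ : Fin 2 × Bool → Equiv.Perm X := fun p => cond p.2 (f p.1) (f p.1)⁻¹ with hσ
  -- basic facts
  have hf0 : f 0 = T₀ := by simp [hf]
  have hf1 : f 1 = T₁ := by simp [hf]
  have h2 : ∀ z : X, T₀ (T₀ z) ≠ z := by
    intro z hz
    have hfix : (T₀ ^ (2 : ℕ)) z = z := by
      simpa [pow_succ, Equiv.Perm.mul_apply] using hz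
    have hsub : {y | ∃ n : ℤ, (T₀ ^ n) z = y} ⊆ {z, T₀ z} := by
      rintro y ⟨n, rfl⟩
      have hdecomp : T₀ ^ n = T₀ ^ (n % 2) * (T₀ ^ (2 : ℤ)) ^ (n / 2) := by
        rw [← zpow_mul, ← zpow_add]
        congr 1
        omega
      have hfix2 : ((T₀ ^ (2 : ℤ)) ^ (n / 2)) z = z := by
        apply Equiv.Perm.zpow_apply_eq_self_of_apply_eq_self
        simpa using hfix
      rw [hdecomp, Equiv.Perm.mul_apply, hfix2]
      rcases Int.emod_two_eq n with h | h <;> rw [h] <;> simp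
    exact (haper z) (((Set.finite_singleton (T₀ z)).insert z).subset hsub)
  have h2' : ∀ z : X, T₀⁻¹ (T₀⁻¹ z) ≠ z := by
    intro z hz
    apply h2 z
    have := congrArg (fun u => T₀ (T₀ u)) hz
    simpa using this.symm
  have h1 : ∀ z : X, T₁ (T₁ z) ≠ z := by
    intro z hz
    have ha : (z, T₁ z) ∈ L := (hT₁L z (T₁ z)).1 rfl
    have hb : (T₁ z, z) ∈ L := (hT₁L (T₁ z) z).1 hz
    exact hLanti _ _ ha hb
  have h1' : ∀ z : X, T₁⁻¹ (T₁⁻¹ z) ≠ z := by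
    intro z hz
    apply h1 z
    have := congrArg (fun u => T₁ (T₁ u)) hz
    simpa using this.symm
  have hmixA : ∀ z : X, T₁ z ≠ T₀ z := by
    intro z hz
    exact (hLdisj z).1 (hz ▸ (hT₁L z (T₁ z)).1 rfl)
  have hmixB : ∀ z : X, T₁ z ≠ T₀⁻¹ z := by
    intro z hz
    have hmem : (z, T₀⁻¹ z) ∈ L := hz ▸ (hT₁L z (T₁ z)).1 rfl
    have := (hLdisj (T₀⁻¹ z)).2
    rw [show T₀ (T₀⁻¹ z) = z by simp] at this
    exact this hmem
  -- every generator step is an edge of H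
  have hstep : ∀ (p : Fin 2 × Bool) (z : X), (z, σ p z) ∈ H := by
    rintro ⟨i, b⟩ z
    fin_cases i <;> cases b <;>
      simp only [hσ, hf0, hf1, cond_true, cond_false]
    · have := (hHedges (T₀⁻¹ z)).1
      rw [show T₀ (T₀⁻¹ z) = z by simp] at this
      exact hHsymm _ _ this
    · exact (hHedges z).1
    · have := (hHedges (T₁⁻¹ z)).2
      rw [show T₁ (T₁⁻¹ z) = z by simp] at this
      exact hHsymm _ _ this
    · exact (hHedges z).2
  -- non-backtracking: a non-cancelling pair of generators moves every point
  have hnb2 : ∀ p q : Fin 2 × Bool, ¬ (q.1 = p.1 ∧ q.2 = !p.2) →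
      ∀ z : X, σ q (σ p z) ≠ z := by
    have htwo : ∀ j : Fin 2, j = 0 ∨ j = 1 := by decide
    rintro ⟨i, b⟩ ⟨i', b'⟩ hne z hz
    rcases htwo i with rfl | rfl <;> rcases htwo i' with rfl | rfl <;>
      cases b <;> cases b' <;>
      simp only [hσ, hf0, hf1, cond_true, cond_false] at hz hne
    · exact h2' z hz
    · simp at hne
    · simp at hne
    · exact h2 z hz
    · have := congrArg (fun u => T₁ u) hz
      simp only [Equiv.Perm.coe_inv, Equiv.apply_symm_apply] at this
      first | exact hmixB z this | exact hmixB z this.symm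
    · exact hmixA (T₀⁻¹ z) (by rw [hz]; simp)
    · have := congrArg (fun u => T₁ u) hz
      simp only [Equiv.Perm.coe_inv, Equiv.apply_symm_apply] at this
      first | exact hmixA z this | exact hmixA z this.symm
    · exact hmixB (T₀ z) (by rw [hz]; simp)
    · exact hmixB (T₁⁻¹ z) (by rw [hz]; simp)
    · exact hmixA (T₁⁻¹ z) (by rw [hz]; simp)
    · have := congrArg (fun u => T₀ u) hz
      simp only [Equiv.Perm.coe_inv, Equiv.apply_symm_apply] at this
      first | exact hmixA z this | exact hmixA z this.symm
    · have := congrArg (fun u => T₀⁻¹ u) hz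
      simp only [Equiv.Perm.coe_inv, Equiv.symm_apply_apply] at this
      first | exact hmixB z this | exact hmixB z this.symm
    · exact h1' z hz
    · simp at hne
    · simp at hne
    · exact h1 z hz
  intro g hg x hx
  set w : List (Fin 2 × Bool) := g.toWord with hw
  have hk : 0 < w.length := by
    rcases Nat.eq_zero_or_pos w.length with h | h
    · exact absurd (FreeGroup.toWord_eq_nil_iff.1 (List.length_eq_zero_iff.1 h)) hg
    · exact h
  set k := w.length with hkdef
  -- trajectory
  set y : ℕ → X := fun m => ((w.drop (k - m)).map σ).prod x with hy
  have hy0 : y 0 = x := by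
    simp only [hy, Nat.sub_zero, hkdef, List.drop_length, List.map_nil, List.prod_nil,
      Equiv.Perm.one_apply]
  have hyk : y k = x := by
    have hlift : FreeGroup.lift f g = (w.map σ).prod := by
      conv_lhs => rw [← FreeGroup.mk_toWord (x := g)]
      rw [FreeGroup.lift_mk]
    have : ((w.drop 0).map σ).prod x = x := by
      rw [List.drop_zero, ← hlift]
      exact hx
    simpa [hy] using this
  have hstep' : ∀ m < k, ∃ (hm : k - m - 1 < w.length), y (m + 1) = σ (w[k - m - 1]) (y m) := by
    intro m hm
    have hlt : k - m - 1 < w.length := by omega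
    refine ⟨hlt, ?_⟩
    have hdrop : w.drop (k - (m + 1)) = w[k - m - 1] :: w.drop (k - m) := by
      have h1 : k - (m + 1) = k - m - 1 := by omega
      have h2 : k - m - 1 + 1 = k - m := by omega
      rw [h1, List.drop_eq_getElem_cons hlt, h2]
    simp only [hy, hdrop, List.map_cons, List.prod_cons, Equiv.Perm.mul_apply]
  -- reducedness of the word
  have hred : ∀ j, (hj : j + 1 < k) → ¬ (w[j].1 = w[j+1].1 ∧ w[j].2 = !w[j+1].2) := by
    rintro j hj ⟨hh1, hh2⟩
    have hj0 : j < w.length := by omega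
    have hj1 : j + 1 < w.length := hj
    have heq : w[j+1] = (w[j].1, !w[j].2) := by
      apply Prod.ext
      · exact hh1.symm
      · rw [hh2]; simp
    have hdecomp : w = w.take j ++ (w[j].1, w[j].2) :: (w[j].1, !w[j].2) :: w.drop (j + 2) := by
      conv_lhs => rw [← List.take_append_drop j w, List.drop_eq_getElem_cons hj0,
        List.drop_eq_getElem_cons hj1]
      rw [← heq]
    exact FreeGroup.reduce.not (p := False)
      (by rw [← hdecomp]; exact (FreeGroup.reduce_toWord g))
  -- assemble the walk and contradict acyclicity
  have hedge : ∀ m < k, (y m, y (m + 1)) ∈ H := by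
    intro m hm
    obtain ⟨hlt, he⟩ := hstep' m hm
    rw [he]
    exact hstep _ _
  have hnb : ∀ m, m + 2 ≤ k → y (m + 2) ≠ y m := by
    intro m hm
    obtain ⟨hlt1, he1⟩ := hstep' m (by omega)
    obtain ⟨hlt2, he2⟩ := hstep' (m + 1) (by omega)
    have hidx : k - (m + 1) - 1 + 1 = k - m - 1 := by omega
    rw [he2, he1]
    apply hnb2
    have := hred (k - (m + 1) - 1) (by omega)
    intro hcon
    apply this
    constructor
    · simp only [hidx] at hcon ⊢; exact hcon.1
    · simp only [hidx] at hcon ⊢; exact hcon.2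
  have := noBacktrackWalk hHacyc hHirr y k hk hedge hnb
  rw [hyk, hy0] at this
  exact this rfl
end
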